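/- Let (Ω, 𝓕, ℙ) be a probability space, X : Ω → ℝ a random variable whose law has density f : ℝ → ℝ with respect to Lebesgue measure, with f continuous at 0, and U : Ω → ℝ an integrable random variable independent of X. Let C ≥ 0 and, for each η > 0, let R_η : Ω → ℝ be measurable with |R_η(ω)| ≤ C·η² for all ω. Then lim_{η→0⁺} ℙ( 1{X + ηU + R_η > 0} ≠ 1{X > 0} ) / η = f(0) · 𝔼[|U|]; equivalently, ℙ(flip at step η) = η·f(0)·𝔼[|U|] + o(η) as η → 0⁺. (Proposition 1: first-order flip-rate law relating learning rate to activation sign changes.) -/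

import Mathlib

open MeasureTheory Filter Topology



private lemma aux_max_ratio {F : ℝ → ℝ} {d : ℝ} (hF : HasDerivAt F d 0) (hF0 : F 0 = 0)
    {a : ℝ → ℝ} {c : ℝ} (ha : Tendsto (fun η => a η / η) (𝓝[>] (0:ℝ)) (𝓝 c)) :
    Tendsto (fun η => F (max (a η) 0) / η) (𝓝[>] (0:ℝ)) (𝓝 (d * max c 0)) := by
  set l := 𝓝[>] (0:ℝ)
  have hpos : ∀ᶠ η in l, (0:ℝ) < η := self_mem_nhdsWithin
  set s : ℝ → ℝ := fun η => max (a η) 0 with hs_def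
  have hratio : Tendsto (fun η => s η / η) l (𝓝 (max c 0)) := by
    have h1 : Tendsto (fun η => max (a η / η) 0) l (𝓝 (max c 0)) :=
      ha.max tendsto_const_nhds
    refine h1.congr' ?_
    filter_upwards [hpos] with η hη
    have h := max_div_div_right hη.le (a η) 0
    rw [zero_div] at h
    exact h.symm ▸ rfl
  have hs0 : Tendsto s l (𝓝 0) := by
    have : Tendsto (fun η => (s η / η) * η) l (𝓝 (max c 0 * 0)) :=
      hratio.mul (tendsto_nhdsWithin_of_tendsto_nhds tendsto_id)
    rw [mul_zero] at this
    refine this.congr' ?_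
    filter_upwards [hpos] with η hη
    field_simp
  have hlil : (fun x => F x - x * d) =o[𝓝 (0:ℝ)] fun x => x := by
    have := hasDerivAt_iff_isLittleO.mp hF
    simpa [hF0, mul_comm] using this
  have h2 : (fun η => F (s η) - s η * d) =o[l] fun η => s η := hlil.comp_tendsto hs0
  have h3 : (fun η => s η) =O[l] fun η => η := by
    have hb : (fun η => s η / η) =O[l] (fun _ => (1:ℝ)) := hratio.isBigO_one ℝ
    have := hb.mul (Asymptotics.isBigO_refl (fun η : ℝ => η) l)
    simp only [one_mul] at this
    refine (Asymptotics.IsBigO.congr' this ?_ (by rfl))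
    filter_upwards [hpos] with η hη
    field_simp
  have h4 : (fun η => F (s η) - s η * d) =o[l] fun η => η := h2.trans_isBigO h3
  have h5 : Tendsto (fun η => (F (s η) - s η * d) / η) l (𝓝 0) := h4.tendsto_div_nhds_zero
  have h6 : Tendsto (fun η => (F (s η) - s η * d) / η + d * (s η / η)) l
      (𝓝 (0 + d * max c 0)) := h5.add (hratio.const_mul d)
  rw [zero_add] at h6
  refine h6.congr ?_
  intro η
  have hx : d * (s η / η) = s η * d / η := by ring
  rw [hx, ← add_div, sub_add_cancel]


private lemma aux_min_ratio {F : ℝ → ℝ} {d : ℝ} (hF : HasDerivAt F d 0) (hF0 : F 0 = 0)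
    {a : ℝ → ℝ} {c : ℝ} (ha : Tendsto (fun η => a η / η) (𝓝[>] (0:ℝ)) (𝓝 c)) :
    Tendsto (fun η => F (min (a η) 0) / η) (𝓝[>] (0:ℝ)) (𝓝 (d * min c 0)) := by
  have hG : HasDerivAt (fun x : ℝ => F (-x)) (d * (-1)) 0 := by
    exact HasDerivAt.comp 0 (by simpa using hF) (hasDerivAt_neg 0)
  have hG0 : F (-(0:ℝ)) = 0 := by simpa using hF0
  have ha' : Tendsto (fun η => (-(a η)) / η) (𝓝[>] (0:ℝ)) (𝓝 (-c)) := by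
    have := ha.neg
    refine this.congr fun η => by ring
  have := aux_max_ratio hG hG0 ha'
  have heq : ∀ η : ℝ, F (-(max (-(a η)) 0)) = F (min (a η) 0) := by
    intro η
    congr 1
    rw [← min_neg_neg, neg_neg, neg_zero]
  have hfin : Tendsto (fun η => F (min (a η) 0) / η) (𝓝[>] (0:ℝ))
      (𝓝 (d * (-1) * max (-c) 0)) := this.congr fun η => by rw [heq η]
  have : d * (-1) * max (-c) 0 = d * min c 0 := by
    rcases le_total c 0 with h | h
    · rw [max_eq_left (by linarith), min_eq_left h]; ring
    · rw [max_eq_right (by linarith), min_eq_right h]; ring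
  rwa [this] at hfin

private lemma aux_est (f : ℝ → ℝ) (hf0 : ∀ t, 0 ≤ f t) (hc : ContinuousAt f 0)
    (μ : Measure ℝ) (hμ : μ = volume.withDensity fun t => ENNReal.ofReal (f t))
    (hfin : ∀ s : Set ℝ, μ s ≠ ⊤)
    {ε : ℝ} (hε : 0 < ε) :
    ∃ δ > 0, ∀ s : ℝ, |s| ≤ δ →
      |((μ (Set.Ioc 0 s)).toReal - (μ (Set.Ioc s 0)).toReal) - f 0 * s| ≤ ε * |s| := by
  obtain ⟨δ, δpos, hδ⟩ := Metric.continuousAt_iff.mp hc ε hε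
  refine ⟨δ/2, by positivity, fun s hs => ?_⟩
  have hball : ∀ t : ℝ, |t| ≤ δ/2 → f 0 - ε ≤ f t ∧ f t ≤ f 0 + ε := by
    intro t ht
    have : dist t 0 < δ := by
      rw [Real.dist_eq, sub_zero]; linarith
    have := hδ this
    rw [Real.dist_eq] at this
    constructor <;> [linarith [abs_lt.mp this]; linarith [abs_lt.mp this]]
  rcases le_or_gt 0 s with h0 | h0
  · -- s ≥ 0
    have hempty : Set.Ioc s 0 = ∅ := Set.Ioc_eq_empty (by intro h; exact absurd h (not_lt.mpr h0))
    have habs : |s| = s := abs_of_nonneg h0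
    have hup : μ (Set.Ioc 0 s) ≤ ENNReal.ofReal ((f 0 + ε) * s) := by
      rw [hμ, withDensity_apply _ measurableSet_Ioc]
      calc ∫⁻ t in Set.Ioc 0 s, ENNReal.ofReal (f t)
          ≤ ∫⁻ _t in Set.Ioc 0 s, ENNReal.ofReal (f 0 + ε) := by
            refine setLIntegral_mono' measurableSet_Ioc fun t ht => ?_
            refine ENNReal.ofReal_le_ofReal ((hball t ?_).2)
            rw [abs_of_pos ht.1]; exact le_trans ht.2 (habs ▸ hs)
        _ = ENNReal.ofReal (f 0 + ε) * volume (Set.Ioc 0 s) := setLIntegral_const _ _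
        _ = ENNReal.ofReal ((f 0 + ε) * s) := by
            rw [Real.volume_Ioc, sub_zero, ← ENNReal.ofReal_mul (by linarith [hf0 0])]
    have hdown : ENNReal.ofReal ((f 0 - ε) * s) ≤ μ (Set.Ioc 0 s) := by
      rcases le_or_gt (f 0 - ε) 0 with hneg | hposf
      · have h' : (f 0 - ε) * s ≤ 0 := mul_nonpos_of_nonpos_of_nonneg hneg h0
        rw [ENNReal.ofReal_eq_zero.mpr h']
        exact zero_le'
      · rw [hμ, withDensity_apply _ measurableSet_Ioc]
        calc ENNReal.ofReal ((f 0 - ε) * s)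
            = ENNReal.ofReal (f 0 - ε) * volume (Set.Ioc 0 s) := by
              rw [Real.volume_Ioc, sub_zero, ← ENNReal.ofReal_mul hposf.le]
          _ = ∫⁻ _t in Set.Ioc 0 s, ENNReal.ofReal (f 0 - ε) := (setLIntegral_const _ _).symm
          _ ≤ ∫⁻ t in Set.Ioc 0 s, ENNReal.ofReal (f t) := by
              refine setLIntegral_mono' measurableSet_Ioc fun t ht => ?_
              refine ENNReal.ofReal_le_ofReal ((hball t ?_).1)
              rw [abs_of_pos ht.1]; exact le_trans ht.2 (habs ▸ hs)
    have h1 : (μ (Set.Ioc 0 s)).toReal ≤ (f 0 + ε) * s :=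
      ENNReal.toReal_le_of_le_ofReal (by nlinarith [hf0 0]) hup
    have h2 : (f 0 - ε) * s ≤ (μ (Set.Ioc 0 s)).toReal :=
      (ENNReal.ofReal_le_iff_le_toReal (hfin _)).mp hdown
    rw [hempty, habs]
    simp only [measure_empty, ENNReal.toReal_zero, sub_zero]
    rw [abs_le]
    constructor <;> nlinarith
  · -- s < 0
    have hempty : Set.Ioc 0 s = ∅ := Set.Ioc_eq_empty (not_lt.mpr h0.le)
    have habs : |s| = -s := abs_of_neg h0
    have hup : μ (Set.Ioc s 0) ≤ ENNReal.ofReal ((f 0 + ε) * (-s)) := by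
      rw [hμ, withDensity_apply _ measurableSet_Ioc]
      calc ∫⁻ t in Set.Ioc s 0, ENNReal.ofReal (f t)
          ≤ ∫⁻ _t in Set.Ioc s 0, ENNReal.ofReal (f 0 + ε) := by
            refine setLIntegral_mono' measurableSet_Ioc fun t ht => ?_
            refine ENNReal.ofReal_le_ofReal ((hball t ?_).2)
            rw [abs_le]
            constructor
            · linarith [ht.1, habs ▸ hs]
            · linarith [ht.2, le_of_lt h0, habs ▸ hs]
        _ = ENNReal.ofReal (f 0 + ε) * volume (Set.Ioc s 0) := setLIntegral_const _ _
        _ = ENNReal.ofReal ((f 0 + ε) * (-s)) := by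
            rw [Real.volume_Ioc, zero_sub, ← ENNReal.ofReal_mul (by linarith [hf0 0])]
    have hdown : ENNReal.ofReal ((f 0 - ε) * (-s)) ≤ μ (Set.Ioc s 0) := by
      rcases le_or_gt (f 0 - ε) 0 with hneg | hposf
      · have h' : (f 0 - ε) * (-s) ≤ 0 := mul_nonpos_of_nonpos_of_nonneg hneg (by linarith)
        rw [ENNReal.ofReal_eq_zero.mpr h']
        exact zero_le'
      · rw [hμ, withDensity_apply _ measurableSet_Ioc]
        calc ENNReal.ofReal ((f 0 - ε) * (-s))
            = ENNReal.ofReal (f 0 - ε) * volume (Set.Ioc s 0) := by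
              rw [Real.volume_Ioc, zero_sub, ← ENNReal.ofReal_mul hposf.le]
          _ = ∫⁻ _t in Set.Ioc s 0, ENNReal.ofReal (f 0 - ε) := (setLIntegral_const _ _).symm
          _ ≤ ∫⁻ t in Set.Ioc s 0, ENNReal.ofReal (f t) := by
              refine setLIntegral_mono' measurableSet_Ioc fun t ht => ?_
              refine ENNReal.ofReal_le_ofReal ((hball t ?_).1)
              rw [abs_le]
              constructor
              · linarith [ht.1, habs ▸ hs]
              · linarith [ht.2, le_of_lt h0, habs ▸ hs]
    have h1 : (μ (Set.Ioc s 0)).toReal ≤ (f 0 + ε) * (-s) :=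
      ENNReal.toReal_le_of_le_ofReal (by nlinarith [hf0 0]) hup
    have h2 : (f 0 - ε) * (-s) ≤ (μ (Set.Ioc s 0)).toReal :=
      (ENNReal.ofReal_le_iff_le_toReal (hfin _)).mp hdown
    rw [hempty, habs]
    simp only [measure_empty, ENNReal.toReal_zero, zero_sub]
    rw [abs_le]
    constructor <;> nlinarith


private lemma aux_D_deriv (f : ℝ → ℝ) (hf0 : ∀ t, 0 ≤ f t) (hc : ContinuousAt f 0)
    (μ : Measure ℝ) (hμ : μ = volume.withDensity fun t => ENNReal.ofReal (f t))
    (hfin : ∀ s : Set ℝ, μ s ≠ ⊤) :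
    HasDerivAt (fun s => (μ (Set.Ioc 0 s)).toReal - (μ (Set.Ioc s 0)).toReal) (f 0) 0 := by
  rw [hasDerivAt_iff_isLittleO, Asymptotics.isLittleO_iff]
  intro c hcpos
  obtain ⟨δ, δpos, hδ⟩ := aux_est f hf0 hc μ hμ hfin hcpos
  have hev : ∀ᶠ x in 𝓝 (0:ℝ), |x| ≤ δ := by
    filter_upwards [Metric.ball_mem_nhds (0:ℝ) δpos] with x hx
    rw [Metric.mem_ball, Real.dist_eq, sub_zero] at hx
    exact hx.le
  filter_upwards [hev] with x hx
  have := hδ x hx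
  simp only [Set.Ioc_self, measure_empty, ENNReal.toReal_zero, sub_zero, sub_self, zero_sub,
    smul_eq_mul, Real.norm_eq_abs]
  rwa [mul_comm x (f 0)]


set_option maxHeartbeats 2000000 in
private lemma aux_key {Ω : Type*} [MeasurableSpace Ω] (ℙ : Measure Ω) [IsProbabilityMeasure ℙ]
    (X U : Ω → ℝ) (hX : Measurable X) (hU : Measurable U)
    (f : ℝ → ℝ) (hf_nonneg : ∀ t, 0 ≤ f t)
    (hXf : Measure.map X ℙ = volume.withDensity fun t => ENNReal.ofReal (f t))
    (hf_cont : ContinuousAt f 0)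
    (hU_int : Integrable U ℙ)
    (hindep : ProbabilityTheory.IndepFun X U ℙ)
    (c p q : ℝ) (hp : |p| ≤ c) (hq : |q| ≤ c) :
    Tendsto (fun η : ℝ => (ℙ {ω | (0 < X ω ∧ X ω ≤ -η * U ω + p * η ^ 2) ∨
        (-η * U ω + q * η ^ 2 < X ω ∧ X ω ≤ 0)}).toReal / η) (𝓝[>] (0:ℝ))
      (𝓝 (f 0 * ∫ ω, |U ω| ∂ℙ)) := by
  have hc0 : 0 ≤ c := le_trans (abs_nonneg p) hp
  set l := 𝓝[>] (0:ℝ) with hl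
  set μ := Measure.map X ℙ with hμdef
  set ν := Measure.map U ℙ with hνdef
  haveI hPμ : IsProbabilityMeasure μ := Measure.isProbabilityMeasure_map hX.aemeasurable
  haveI hPν : IsProbabilityMeasure ν := Measure.isProbabilityMeasure_map hU.aemeasurable
  have hfin : ∀ s : Set ℝ, μ s ≠ ⊤ := fun s => measure_ne_top μ s
  set D : ℝ → ℝ := fun s => (μ (Set.Ioc 0 s)).toReal - (μ (Set.Ioc s 0)).toReal with hD_def
  have hD : HasDerivAt D (f 0) 0 := aux_D_deriv f hf_nonneg hf_cont μ hXf hfin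
  have hD0 : D 0 = 0 := by simp [hD_def]
  have hP : ∀ s : ℝ, (μ (Set.Ioc 0 s)).toReal = D (max s 0) := by
    intro s
    rcases le_or_gt 0 s with h | h
    · rw [max_eq_left h, hD_def]
      simp [Set.Ioc_eq_empty (not_lt.mpr h)]
    · rw [max_eq_right h.le, hD_def]
      simp [Set.Ioc_eq_empty (not_lt.mpr h.le)]
  have hN : ∀ s : ℝ, (μ (Set.Ioc s 0)).toReal = -D (min s 0) := by
    intro s
    rcases le_or_gt s 0 with h | h
    · rw [min_eq_left h, hD_def]
      simp [Set.Ioc_eq_empty (not_lt.mpr h)]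
    · rw [min_eq_right h.le, hD_def]
      simp [Set.Ioc_eq_empty (not_lt.mpr h.le), Set.Ioc_eq_empty (not_lt.mpr h.le)]
  -- product structure
  have hT : Measurable (fun ω => (U ω, X ω)) := hU.prodMk hX
  have hmap : Measure.map (fun ω => (U ω, X ω)) ℙ = ν.prod μ :=
    (ProbabilityTheory.indepFun_iff_map_prod_eq_prod_map_map hU.aemeasurable
      hX.aemeasurable).mp hindep.symm
  have hSmeas : ∀ η : ℝ, MeasurableSet {z : ℝ × ℝ |
      (0 < z.2 ∧ z.2 ≤ -η * z.1 + p * η ^ 2) ∨ (-η * z.1 + q * η ^ 2 < z.2 ∧ z.2 ≤ 0)} := by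
    intro η
    refine MeasurableSet.union ?_ ?_
    · exact (measurableSet_lt measurable_const measurable_snd).inter
        (measurableSet_le measurable_snd (by fun_prop))
    · exact (measurableSet_lt (by fun_prop) measurable_snd).inter
        (measurableSet_le measurable_snd measurable_const)
  have hslice : ∀ η u : ℝ, Prod.mk u ⁻¹' {z : ℝ × ℝ |
      (0 < z.2 ∧ z.2 ≤ -η * z.1 + p * η ^ 2) ∨ (-η * z.1 + q * η ^ 2 < z.2 ∧ z.2 ≤ 0)} =
      Set.Ioc 0 (-η * u + p * η ^ 2) ∪ Set.Ioc (-η * u + q * η ^ 2) 0 := by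
    intro η u
    ext x
    simp [Set.mem_Ioc]
  have htoReal : ∀ η : ℝ, (ℙ {ω | (0 < X ω ∧ X ω ≤ -η * U ω + p * η ^ 2) ∨
      (-η * U ω + q * η ^ 2 < X ω ∧ X ω ≤ 0)}).toReal =
      ∫ u, (μ (Set.Ioc 0 (-η * u + p * η ^ 2) ∪ Set.Ioc (-η * u + q * η ^ 2) 0)).toReal ∂ν := by
    intro η
    have h1 : {ω | (0 < X ω ∧ X ω ≤ -η * U ω + p * η ^ 2) ∨
        (-η * U ω + q * η ^ 2 < X ω ∧ X ω ≤ 0)} = (fun ω => (U ω, X ω)) ⁻¹' {z : ℝ × ℝ |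
        (0 < z.2 ∧ z.2 ≤ -η * z.1 + p * η ^ 2) ∨ (-η * z.1 + q * η ^ 2 < z.2 ∧ z.2 ≤ 0)} := rfl
    have hmble : Measurable fun u => μ (Set.Ioc 0 (-η * u + p * η ^ 2) ∪
        Set.Ioc (-η * u + q * η ^ 2) 0) := by
      have h2 := measurable_measure_prodMk_left (ν := μ) (hSmeas η)
      simpa only [hslice η] using h2
    rw [h1, ← Measure.map_apply hT (hSmeas η), hmap, Measure.prod_apply (hSmeas η)]
    simp_rw [hslice η]
    rw [← integral_toReal hmble.aemeasurable
      (Eventually.of_forall fun u => measure_lt_top μ _)]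
  have hdisj : ∀ a b : ℝ, Disjoint (Set.Ioc (0:ℝ) a) (Set.Ioc b 0) :=
    fun a b => Set.disjoint_left.mpr fun x hx1 hx2 => absurd hx2.2 (not_le.mpr hx1.1)
  have hsplit : ∀ η u : ℝ, (μ (Set.Ioc 0 (-η * u + p * η ^ 2) ∪
      Set.Ioc (-η * u + q * η ^ 2) 0)).toReal =
      (μ (Set.Ioc 0 (-η * u + p * η ^ 2))).toReal +
      (μ (Set.Ioc (-η * u + q * η ^ 2) 0)).toReal := by
    intro η u
    rw [measure_union (hdisj _ _) measurableSet_Ioc,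
      ENNReal.toReal_add (measure_ne_top μ _) (measure_ne_top μ _)]
  -- integrability of |u| under ν
  have hid : Integrable (fun u : ℝ => u) ν := by
    rw [hνdef]
    exact (integrable_map_measure aestronglyMeasurable_id hU.aemeasurable).mpr hU_int
  have habs_int : Integrable (fun u : ℝ => |u|) ν := hid.abs
  -- bound from aux_est with ε = 1
  obtain ⟨δ, δpos, hδ⟩ := aux_est f hf_nonneg hf_cont μ hXf hfin one_pos
  have hPbd : ∀ s : ℝ, |s| ≤ δ → (μ (Set.Ioc 0 s)).toReal ≤ (f 0 + 1) * |s| := by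
    intro s hs
    rcases le_or_gt 0 s with h | h
    · have h1 := (abs_le.mp (hδ s hs)).2
      rw [Set.Ioc_eq_empty (not_lt.mpr h)] at h1
      simp only [measure_empty, ENNReal.toReal_zero, sub_zero, one_mul] at h1
      rw [abs_of_nonneg h] at h1 ⊢
      linarith
    · rw [Set.Ioc_eq_empty (not_lt.mpr h.le)]
      simp only [measure_empty, ENNReal.toReal_zero]
      exact mul_nonneg (by linarith [hf_nonneg 0]) (abs_nonneg s)
  have hNbd : ∀ s : ℝ, |s| ≤ δ → (μ (Set.Ioc s 0)).toReal ≤ (f 0 + 1) * |s| := by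
    intro s hs
    rcases le_or_gt s 0 with h | h
    · have h1 := (abs_le.mp (hδ s hs)).1
      rw [Set.Ioc_eq_empty (not_lt.mpr h)] at h1
      simp only [measure_empty, ENNReal.toReal_zero, zero_sub, one_mul] at h1
      rw [abs_of_nonpos h] at h1 ⊢
      linarith
    · rw [Set.Ioc_eq_empty (not_lt.mpr h.le)]
      simp only [measure_empty, ENNReal.toReal_zero]
      exact mul_nonneg (by linarith [hf_nonneg 0]) (abs_nonneg s)
  set η₀ : ℝ := min 1 (δ / (2 * (c + 1))) with hη₀_def
  have hη₀pos : 0 < η₀ := lt_min one_pos (by positivity)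
  have hη₀1 : η₀ ≤ 1 := min_le_left _ _
  have hη₀δ : η₀ ≤ δ / (2 * (c + 1)) := min_le_right _ _
  set K : ℝ := 2 * (f 0 + 1) + 4 / δ with hK_def
  set K₂ : ℝ := 2 * (f 0 + 1) * c with hK₂_def
  have hbound_int : Integrable (fun u : ℝ => K * |u| + K₂) ν :=
    (habs_int.const_mul K).add (integrable_const K₂)
  have hDCT : Tendsto (fun η => ∫ u, (μ (Set.Ioc 0 (-η * u + p * η ^ 2) ∪
      Set.Ioc (-η * u + q * η ^ 2) 0)).toReal / η ∂ν) l (𝓝 (∫ u, f 0 * |u| ∂ν)) := by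
    refine tendsto_integral_filter_of_dominated_convergence (fun u => K * |u| + K₂) ?_ ?_
      hbound_int ?_
    · refine Eventually.of_forall fun η => ?_
      have hmble : Measurable fun u => μ (Set.Ioc 0 (-η * u + p * η ^ 2) ∪
          Set.Ioc (-η * u + q * η ^ 2) 0) := by
        have h2 := measurable_measure_prodMk_left (ν := μ) (hSmeas η)
        simpa only [hslice η] using h2
      exact (hmble.ennreal_toReal.div_const η).aestronglyMeasurable
    · have hmem : Set.Ioc (0:ℝ) η₀ ∈ l := Ioc_mem_nhdsGT_of_mem ⟨le_refl 0, hη₀pos⟩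
      rw [hl, eventually_iff_exists_mem]
      refine ⟨Set.Ioc 0 η₀, hmem, fun η hη => Eventually.of_forall fun u => ?_⟩
      have hηpos : 0 < η := hη.1
      have hη1 : η ≤ 1 := le_trans hη.2 hη₀1
      have hηδ : η * (2 * (c + 1)) ≤ δ := by
        have := hη.2
        rw [le_div_iff₀ (by positivity)] at hη₀δ
        nlinarith
      have hnn : 0 ≤ (μ (Set.Ioc 0 (-η * u + p * η ^ 2) ∪
          Set.Ioc (-η * u + q * η ^ 2) 0)).toReal / η := by positivity
      rw [Real.norm_eq_abs, abs_of_nonneg hnn, hsplit η u]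
      have he1 : |(-η * u + p * η ^ 2)| ≤ η * |u| + c * η ^ 2 := by
        calc |(-η * u + p * η ^ 2)| ≤ |(-η * u)| + |p * η ^ 2| := abs_add_le _ _
          _ = η * |u| + |p| * η ^ 2 := by
              rw [abs_mul, abs_mul, abs_neg, abs_of_pos hηpos, abs_of_nonneg (sq_nonneg η)]
          _ ≤ η * |u| + c * η ^ 2 := by nlinarith [sq_nonneg η]
      have he2 : |(-η * u + q * η ^ 2)| ≤ η * |u| + c * η ^ 2 := by
        calc |(-η * u + q * η ^ 2)| ≤ |(-η * u)| + |q * η ^ 2| := abs_add_le _ _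
          _ = η * |u| + |q| * η ^ 2 := by
              rw [abs_mul, abs_mul, abs_neg, abs_of_pos hηpos, abs_of_nonneg (sq_nonneg η)]
          _ ≤ η * |u| + c * η ^ 2 := by nlinarith [sq_nonneg η]
      rcases le_or_gt (|u| * η) (δ / 2) with hcase | hcase
      · have t1 : 0 ≤ c * (η - η ^ 2) := mul_nonneg hc0 (by nlinarith)
        have hbig : η * |u| + c * η ^ 2 ≤ δ := by nlinarith [abs_nonneg u]
        have c1 : (f 0 + 1) * |(-η * u + p * η ^ 2)| ≤ (f 0 + 1) * (η * |u| + c * η ^ 2) :=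
          mul_le_mul_of_nonneg_left he1 (by linarith [hf_nonneg 0])
        have c2 : (f 0 + 1) * |(-η * u + q * η ^ 2)| ≤ (f 0 + 1) * (η * |u| + c * η ^ 2) :=
          mul_le_mul_of_nonneg_left he2 (by linarith [hf_nonneg 0])
        have b1 := le_trans (hPbd _ (le_trans he1 hbig)) c1
        have b2 := le_trans (hNbd _ (le_trans he2 hbig)) c2
        rw [div_le_iff₀ hηpos]
        have key0 : 0 ≤ 2 * (f 0 + 1) * c * (η - η ^ 2) := by
          refine mul_nonneg (mul_nonneg (by linarith [hf_nonneg 0]) hc0) (by nlinarith)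
        have key1 : 0 ≤ 4 / δ * |u| * η := by positivity
        rw [hK_def, hK₂_def]
        nlinarith [abs_nonneg u, hf_nonneg 0]
      · have b1 : (μ (Set.Ioc 0 (-η * u + p * η ^ 2))).toReal ≤ 1 := by
          have h := ENNReal.toReal_mono ENNReal.one_ne_top
            (prob_le_one (μ := μ) (s := Set.Ioc 0 (-η * u + p * η ^ 2)))
          simpa using h
        have b2 : (μ (Set.Ioc (-η * u + q * η ^ 2) 0)).toReal ≤ 1 := by
          have h := ENNReal.toReal_mono ENNReal.one_ne_top
            (prob_le_one (μ := μ) (s := Set.Ioc (-η * u + q * η ^ 2) 0))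
          simpa using h
        rw [div_le_iff₀ hηpos]
        have h4 : 2 ≤ 4 / δ * |u| * η := by
          rw [div_mul_eq_mul_div, div_mul_eq_mul_div, le_div_iff₀ δpos]
          linarith
        have n1 : 0 ≤ 2 * (f 0 + 1) * |u| * η :=
          mul_nonneg (mul_nonneg (by linarith [hf_nonneg 0]) (abs_nonneg u)) hηpos.le
        have n2 : 0 ≤ 2 * (f 0 + 1) * c * η :=
          mul_nonneg (mul_nonneg (by linarith [hf_nonneg 0]) hc0) hηpos.le
        rw [hK_def, hK₂_def]
        nlinarith
    · refine Eventually.of_forall fun u => ?_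
      have hr1 : Tendsto (fun η : ℝ => (-η * u + p * η ^ 2) / η) l (𝓝 (-u)) := by
        have h1 : Tendsto (fun η : ℝ => -u + p * η) l (𝓝 (-u + p * 0)) :=
          tendsto_const_nhds.add
            (((tendsto_nhdsWithin_of_tendsto_nhds tendsto_id)).const_mul p)
        rw [mul_zero, add_zero] at h1
        refine h1.congr' ?_
        filter_upwards [self_mem_nhdsWithin] with η (hη : (0:ℝ) < η)
        field_simp
      have hr2 : Tendsto (fun η : ℝ => (-η * u + q * η ^ 2) / η) l (𝓝 (-u)) := by
        have h1 : Tendsto (fun η : ℝ => -u + q * η) l (𝓝 (-u + q * 0)) :=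
          tendsto_const_nhds.add
            (((tendsto_nhdsWithin_of_tendsto_nhds tendsto_id)).const_mul q)
        rw [mul_zero, add_zero] at h1
        refine h1.congr' ?_
        filter_upwards [self_mem_nhdsWithin] with η (hη : (0:ℝ) < η)
        field_simp
      have h1 := aux_max_ratio hD hD0 hr1
      have h2 := aux_min_ratio hD hD0 hr2
      have h3 := h1.sub h2
      have hval : f 0 * max (-u) 0 - f 0 * min (-u) 0 = f 0 * |u| := by
        rw [← mul_sub]
        congr 1
        rcases le_total u 0 with h | h
        · rw [max_eq_left (by linarith), min_eq_right (by linarith), abs_of_nonpos h]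
          ring
        · rw [max_eq_right (by linarith), min_eq_left (by linarith), abs_of_nonneg h]
          ring
      rw [hval] at h3
      refine h3.congr fun η => ?_
      rw [hsplit η u, hP, hN]
      ring
  -- conclude
  have hfinal : (∫ u, f 0 * |u| ∂ν) = f 0 * ∫ ω, |U ω| ∂ℙ := by
    rw [integral_const_mul]
    congr 1
    rw [hνdef]
    exact integral_map hU.aemeasurable (continuous_abs.measurable.aestronglyMeasurable)
  rw [← hfinal]
  refine hDCT.congr fun η => ?_
  rw [htoReal η, integral_div]

/-- Proposition 1 (flip-rate law): for a preactivation `X` with density `f`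
continuous at `0`, an integrable update coefficient `U` independent of `X`,
and second-order remainders `R η` bounded by `C * η ^ 2`, the probability of an
activation sign flip satisfies `ℙ(flip at step η) / η → f 0 * 𝔼[|U|]` as `η → 0⁺`. -/
theorem flip_rate_law
    {Ω : Type*} [MeasurableSpace Ω] (ℙ : Measure Ω) [IsProbabilityMeasure ℙ]
    (X U : Ω → ℝ) (hX : Measurable X) (hU : Measurable U)
    (f : ℝ → ℝ) (hf_nonneg : ∀ t, 0 ≤ f t)
    (hXf : Measure.map X ℙ = volume.withDensity fun t => ENNReal.ofReal (f t))
    (hf_cont : ContinuousAt f 0)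
    (hU_int : Integrable U ℙ)
    (hindep : ProbabilityTheory.IndepFun X U ℙ)
    (C : ℝ) (hC : 0 ≤ C)
    (R : ℝ → Ω → ℝ) (hR_meas : ∀ η, Measurable (R η))
    (hR_bound : ∀ η > 0, ∀ ω, |R η ω| ≤ C * η ^ 2) :
    Tendsto
      (fun η : ℝ =>
        (ℙ {ω | (0 < X ω + η * U ω + R η ω) ≠ (0 < X ω)}).toReal / η)
      (𝓝[>] 0) (𝓝 (f 0 * ∫ ω, |U ω| ∂ℙ)) := by
  have h2C : (0:ℝ) ≤ 2 * C := by linarith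
  have hup := aux_key ℙ X U hX hU f hf_nonneg hXf hf_cont hU_int hindep (2 * C) C (-C)
    (by rw [abs_of_nonneg hC]; linarith) (by rw [abs_neg, abs_of_nonneg hC]; linarith)
  have hlo := aux_key ℙ X U hX hU f hf_nonneg hXf hf_cont hU_int hindep (2 * C) (-(2 * C)) C
    (by rw [abs_neg, abs_of_nonneg h2C]) (by rw [abs_of_nonneg hC]; linarith)
  refine tendsto_of_tendsto_of_tendsto_of_le_of_le' hlo hup ?_ ?_
  · filter_upwards [self_mem_nhdsWithin] with η (hη : (0:ℝ) < η)
    have hsub : {ω | (0 < X ω ∧ X ω ≤ -η * U ω + -(2 * C) * η ^ 2) ∨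
        (-η * U ω + C * η ^ 2 < X ω ∧ X ω ≤ 0)} ⊆
        {ω | (0 < X ω + η * U ω + R η ω) ≠ (0 < X ω)} := by
      intro ω hω
      have hR := abs_le.mp (hR_bound η hη ω)
      have hsq : 0 ≤ C * η ^ 2 := mul_nonneg hC (sq_nonneg η)
      rcases hω with ⟨h1, h2⟩ | ⟨h1, h2⟩
      · have hnp : ¬ (0 < X ω + η * U ω + R η ω) := by
          apply not_lt.mpr
          nlinarith [hR.2]
        intro hEq
        simp only [eq_iff_iff] at hEq
        exact hnp (hEq.mpr h1)
      · have hp : 0 < X ω + η * U ω + R η ω := by nlinarith [hR.1]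
        intro hEq
        simp only [eq_iff_iff] at hEq
        exact (not_lt.mpr h2) (hEq.mp hp)
    have hm : (ℙ {ω | (0 < X ω ∧ X ω ≤ -η * U ω + -(2 * C) * η ^ 2) ∨
        (-η * U ω + C * η ^ 2 < X ω ∧ X ω ≤ 0)}).toReal ≤
        (ℙ {ω | (0 < X ω + η * U ω + R η ω) ≠ (0 < X ω)}).toReal :=
      ENNReal.toReal_mono (measure_ne_top ℙ _) (measure_mono hsub)
    gcongr
  · filter_upwards [self_mem_nhdsWithin] with η (hη : (0:ℝ) < η)
    have hsub : {ω | (0 < X ω + η * U ω + R η ω) ≠ (0 < X ω)} ⊆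
        {ω | (0 < X ω ∧ X ω ≤ -η * U ω + C * η ^ 2) ∨
        (-η * U ω + -C * η ^ 2 < X ω ∧ X ω ≤ 0)} := by
      intro ω hω
      have hR := abs_le.mp (hR_bound η hη ω)
      by_cases hx : 0 < X ω
      · have hnp : ¬ (0 < X ω + η * U ω + R η ω) := fun hp =>
          hω (by simp only [eq_iff_iff]; exact iff_of_true hp hx)
        have := not_lt.mp hnp
        exact Or.inl ⟨hx, by nlinarith [hR.1]⟩
      · have hp : 0 < X ω + η * U ω + R η ω := by
          by_contra hnp
          exact hω (by simp only [eq_iff_iff]; exact iff_of_false hnp hx)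
        exact Or.inr ⟨by nlinarith [hR.2], not_lt.mp hx⟩
    have hm : (ℙ {ω | (0 < X ω + η * U ω + R η ω) ≠ (0 < X ω)}).toReal ≤
        (ℙ {ω | (0 < X ω ∧ X ω ≤ -η * U ω + C * η ^ 2) ∨
        (-η * U ω + -C * η ^ 2 < X ω ∧ X ω ≤ 0)}).toReal :=
      ENNReal.toReal_mono (measure_ne_top ℙ _) (measure_mono hsub)
    gcongr
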